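/- The empirical local half-region depth is uniformly strongly consistent: sup_{x ∈ R^p} | ld_HR(x; X_n, τ) − ld_HR(x; X, τ) | → 0 almost surely as n → ∞. -/

import Mathlib

open MeasureTheory Filter Topology
open scoped ENNReal

variable {p : ℕ}

/-- Lower box `[x - τ, x]` (componentwise). -/
def lowerBox (x τ : Fin p → ℝ) : Set (Fin p → ℝ) :=
  {z | ∀ j, x j - τ j ≤ z j ∧ z j ≤ x j}

/-- Upper box `[x, x + τ]` (componentwise). -/
def upperBox (x τ : Fin p → ℝ) : Set (Fin p → ℝ) :=
  {z | ∀ j, x j ≤ z j ∧ z j ≤ x j + τ j}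

/-- Local half-region depth in `ℝ^p`. -/
noncomputable def ldHR (μ : Measure (Fin p → ℝ)) (x τ : Fin p → ℝ) : ℝ≥0∞ :=
  min (μ (lowerBox x τ)) (μ (upperBox x τ))

/-- Half-region depth in `ℝ^p`. -/
noncomputable def dHR (μ : Measure (Fin p → ℝ)) (x : Fin p → ℝ) : ℝ≥0∞ :=
  min (μ {z | ∀ j, z j ≤ x j}) (μ {z | ∀ j, x j ≤ z j})

/-- Empirical local half-region depth based on the first `n` observations. -/
noncomputable def ldHRemp {Ω : Type*} (X : ℕ → Ω → (Fin p → ℝ)) (n : ℕ) (ω : Ω)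
    (x τ : Fin p → ℝ) : ℝ :=
  min ((n : ℝ)⁻¹ * ∑ i ∈ Finset.range n,
        Set.indicator (lowerBox x τ) (fun _ => (1 : ℝ)) (X i ω))
      ((n : ℝ)⁻¹ * ∑ i ∈ Finset.range n,
        Set.indicator (upperBox x τ) (fun _ => (1 : ℝ)) (X i ω))

/-- Real-valued local half-region depth. -/
noncomputable def ldHRreal (μ : Measure (Fin p → ℝ)) (x τ : Fin p → ℝ) : ℝ :=
  min (μ (lowerBox x τ)).toReal (μ (upperBox x τ)).toReal


section AuxiliaryGC
open Set

/-- limit lemma for Iio -/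
lemma meas_Iio_le {ν : Measure ℝ} [IsProbabilityMeasure ν] {c r : ℝ}
    (h : ∀ s, s < c → ν (Set.Iic s) ≤ ENNReal.ofReal r) :
    ν (Set.Iio c) ≤ ENNReal.ofReal r := by
  have hU : Set.Iio c = ⋃ n : ℕ, Set.Iic (c - ((n:ℝ)+1)⁻¹) := by
    ext z
    simp only [Set.mem_Iio, Set.mem_iUnion, Set.mem_Iic]
    constructor
    · intro hz
      obtain ⟨n, hn⟩ := exists_nat_one_div_lt (sub_pos.2 hz)
      refine ⟨n, ?_⟩
      rw [one_div] at hn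
      linarith
    · rintro ⟨n, hn⟩
      have : (0:ℝ) < ((n:ℝ)+1)⁻¹ := by positivity
      linarith
  rw [hU]
  have hmono : Monotone (fun n : ℕ => Set.Iic (c - ((n:ℝ)+1)⁻¹)) := by
    intro m n hmn
    apply Set.Iic_subset_Iic.2
    have : ((n:ℝ)+1)⁻¹ ≤ ((m:ℝ)+1)⁻¹ := by
      apply inv_anti₀ (by positivity)
      have := (Nat.cast_le (α := ℝ)).2 hmn
      linarith
    linarith
  refine le_of_tendsto' (tendsto_measure_iUnion_atTop hmono) ?_
  intro n
  exact h _ (sub_lt_self c (by positivity))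

lemma exists_grid (ν : Measure ℝ) [IsProbabilityMeasure ν] {ε : ℝ} (hε : 0 < ε) (hε1 : ε < 1) :
    ∃ (K : ℕ) (t : ℕ → ℝ), 1 ≤ K ∧
      (∀ k l, 1 ≤ k → k ≤ l → l ≤ K → t k ≤ t l) ∧
      ν (Set.Iio (t 1)) ≤ ENNReal.ofReal ε ∧
      ν (Set.Ioi (t K)) ≤ ENNReal.ofReal ε ∧
      (∀ k, 1 ≤ k → k + 1 ≤ K → ν (Set.Iio (t (k+1)) \ Set.Iic (t k)) ≤ ENNReal.ofReal ε) := by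
  set F : ℝ → ℝ := fun s => (ν (Set.Iic s)).toReal with hF
  have hFmono : Monotone F := fun u v huv =>
    ENNReal.toReal_mono (measure_ne_top ν _) (measure_mono (Set.Iic_subset_Iic.2 huv))
  have hFtop : Tendsto F atTop (𝓝 1) := by
    have h1 := tendsto_measure_Iic_atTop ν
    have h2 := (ENNReal.tendsto_toReal (a := ν Set.univ) (by simp)).comp h1
    simpa [hF, Function.comp_def] using h2
  have hFbot : Tendsto F atBot (𝓝 0) := by
    have hint : (⋂ x : ℝ, Set.Iic x) = ∅ := by
      ext z
      simp only [Set.mem_iInter, Set.mem_Iic, Set.mem_empty_iff_false, iff_false, not_forall,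
        not_le]
      exact ⟨z - 1, by linarith⟩
    have h1 : Tendsto (fun x : ℝ => ν (Set.Iic x)) atBot (𝓝 (ν (⋂ x : ℝ, Set.Iic x))) :=
      tendsto_measure_iInter_atBot (fun x => measurableSet_Iic.nullMeasurableSet)
        (fun u v huv => Set.Iic_subset_Iic.2 huv) ⟨0, measure_ne_top ν _⟩
    rw [hint, measure_empty] at h1
    have h2 := (ENNReal.tendsto_toReal (a := 0) (by simp)).comp h1
    simpa [hF, Function.comp_def] using h2
  set K : ℕ := ⌈1/ε⌉₊ - 1 with hKdef
  have hceil2 : 2 ≤ ⌈1/ε⌉₊ := by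
    have : (1:ℝ) < 1/ε := (one_lt_div hε).2 hε1
    have := Nat.lt_ceil.2 (by exact_mod_cast this : ((1:ℕ):ℝ) < 1/ε)
    omega
  have hK1 : 1 ≤ K := by omega
  have hKcast : (K:ℝ) = (⌈1/ε⌉₊ : ℝ) - 1 := by
    rw [hKdef]; push_cast [Nat.cast_sub (by omega : 1 ≤ ⌈1/ε⌉₊)]; ring
  have hKε : (K:ℝ) * ε < 1 := by
    have h1 : (⌈1/ε⌉₊ : ℝ) < 1/ε + 1 := Nat.ceil_lt_add_one (by positivity)
    have h2 : (K:ℝ) < 1/ε := by rw [hKcast]; linarith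
    calc (K:ℝ) * ε < (1/ε) * ε := by apply mul_lt_mul_of_pos_right h2 hε
    _ = 1 := by field_simp
  have hK1ε : 1 ≤ ((K:ℝ)+1) * ε := by
    have h1 : 1/ε ≤ (⌈1/ε⌉₊ : ℝ) := Nat.le_ceil _
    have h2 : (1/ε) * ε ≤ ((K:ℝ)+1) * ε := by
      apply mul_le_mul_of_nonneg_right _ hε.le
      rw [hKcast]; linarith
    calc (1:ℝ) = (1/ε) * ε := by field_simp
    _ ≤ _ := h2
  set S : ℕ → Set ℝ := fun k => {s | (k:ℝ) * ε ≤ F s} with hS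
  have hne : ∀ k, k ≤ K → (S k).Nonempty := by
    intro k hk
    have hev : ∀ᶠ s in atTop, (K:ℝ)*ε < F s := hFtop.eventually (eventually_gt_nhds hKε)
    obtain ⟨s, hs⟩ := hev.exists
    exact ⟨s, le_trans (mul_le_mul_of_nonneg_right (by exact_mod_cast hk) hε.le) hs.le⟩
  have hbdd : ∀ k, 1 ≤ k → BddBelow (S k) := by
    intro k hk
    have hev : ∀ᶠ s in atBot, F s < ε := hFbot.eventually (eventually_lt_nhds hε)
    obtain ⟨s₀, hs₀⟩ := hev.exists
    refine ⟨s₀, fun s hs => ?_⟩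
    by_contra hcon
    push_neg at hcon
    have h1 : F s ≤ F s₀ := hFmono hcon.le
    have h2 : ε ≤ (k:ℝ) * ε := le_mul_of_one_le_left hε.le (by exact_mod_cast hk)
    have := hs
    simp only [hS, Set.mem_setOf_eq] at this
    linarith
  set t : ℕ → ℝ := fun k => sInf (S k) with ht
  have hlt : ∀ k, 1 ≤ k → ∀ s, s < t k → F s < (k:ℝ) * ε := by
    intro k hk s hs
    by_contra hcon
    push_neg at hcon
    exact absurd (csInf_le (hbdd k hk) hcon) (not_le.2 hs)
  have hFt : ∀ k, 1 ≤ k → k ≤ K → ENNReal.ofReal ((k:ℝ)*ε) ≤ ν (Set.Iic (t k)) := by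
    intro k hk hkK
    have hIic : Set.Iic (t k) = ⋂ n : ℕ, Set.Iic (t k + ((n:ℝ)+1)⁻¹) := by
      ext z
      simp only [Set.mem_Iic, Set.mem_iInter]
      constructor
      · intro hz n
        exact hz.trans (le_add_of_nonneg_right (by positivity))
      · intro hz
        by_contra hcon
        push_neg at hcon
        obtain ⟨n, hn⟩ := exists_nat_one_div_lt (sub_pos.2 hcon)
        rw [one_div] at hn
        have := hz n
        linarith
    have htend : Tendsto (fun n : ℕ => ν (Set.Iic (t k + ((n:ℝ)+1)⁻¹))) atTop
        (𝓝 (ν (⋂ n : ℕ, Set.Iic (t k + ((n:ℝ)+1)⁻¹)))) := by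
      apply tendsto_measure_iInter_atTop
      · exact fun n => measurableSet_Iic.nullMeasurableSet
      · intro m n hmn
        apply Set.Iic_subset_Iic.2
        have : ((n:ℝ)+1)⁻¹ ≤ ((m:ℝ)+1)⁻¹ := by
          apply inv_anti₀ (by positivity)
          have := (Nat.cast_le (α := ℝ)).2 hmn
          linarith
        linarith
      · exact ⟨0, measure_ne_top ν _⟩
    rw [hIic]
    refine ge_of_tendsto' htend ?_
    intro n
    have hpos : (0:ℝ) < ((n:ℝ)+1)⁻¹ := by positivity
    obtain ⟨s, hsmem, hslt⟩ := exists_lt_of_csInf_lt (hne k hkK) (by linarith : t k < t k + ((n:ℝ)+1)⁻¹)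
    have h1 : ENNReal.ofReal ((k:ℝ)*ε) ≤ ν (Set.Iic s) := by
      rw [ENNReal.ofReal_le_iff_le_toReal (measure_ne_top ν _)]
      exact hsmem
    exact le_trans h1 (measure_mono (Set.Iic_subset_Iic.2 hslt.le))
  have hIio : ∀ k, 1 ≤ k → ν (Set.Iio (t k)) ≤ ENNReal.ofReal ((k:ℝ)*ε) := by
    intro k hk
    apply meas_Iio_le
    intro s hs
    have := (hlt k hk s hs).le
    rw [← ENNReal.ofReal_toReal (measure_ne_top ν (Set.Iic s))]
    exact ENNReal.ofReal_le_ofReal this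
  have hmonot : ∀ k l, 1 ≤ k → k ≤ l → l ≤ K → t k ≤ t l := by
    intro k l hk hkl hlK
    apply csInf_le_csInf (hbdd k hk) (hne l hlK)
    intro s hs
    simp only [hS, Set.mem_setOf_eq] at hs ⊢
    refine le_trans (mul_le_mul_of_nonneg_right ?_ hε.le) hs
    exact_mod_cast hkl
  refine ⟨K, t, hK1, hmonot, ?_, ?_, ?_⟩
  · simpa using hIio 1 le_rfl
  · have h1 : ν (Set.Ioi (t K)) = 1 - ν (Set.Iic (t K)) := by
      rw [← Set.compl_Iic, measure_compl measurableSet_Iic (measure_ne_top ν _), measure_univ]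
    rw [h1]
    calc (1:ℝ≥0∞) - ν (Set.Iic (t K)) ≤ ENNReal.ofReal (((K:ℝ)+1)*ε) - ENNReal.ofReal ((K:ℝ)*ε) := by
          apply tsub_le_tsub _ (hFt K hK1 le_rfl)
          exact ENNReal.one_le_ofReal.2 hK1ε
    _ = ENNReal.ofReal (((K:ℝ)+1)*ε - (K:ℝ)*ε) := by
          rw [ENNReal.ofReal_sub _ (by positivity)]
    _ = ENNReal.ofReal ε := by ring_nf
  · intro k hk hkK
    by_cases hord : t (k+1) ≤ t k
    · have : Set.Iio (t (k+1)) \ Set.Iic (t k) = ∅ := by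
        ext z; simp only [Set.mem_diff, Set.mem_Iio, Set.mem_Iic, Set.mem_empty_iff_false,
          iff_false, not_and, not_not]
        intro hz; linarith
      simp [this]
    · push_neg at hord
      have hsub : Set.Iic (t k) ⊆ Set.Iio (t (k+1)) := fun z hz => lt_of_le_of_lt hz hord
      rw [measure_diff hsub measurableSet_Iic.nullMeasurableSet (measure_ne_top ν _)]
      calc ν (Set.Iio (t (k+1))) - ν (Set.Iic (t k))
          ≤ ENNReal.ofReal (((k:ℝ)+1)*ε) - ENNReal.ofReal ((k:ℝ)*ε) := by
            apply tsub_le_tsub _ (hFt k hk (by omega))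
            have := hIio (k+1) (by omega)
            push_cast at this ⊢
            exact this
      _ = ENNReal.ofReal (((k:ℝ)+1)*ε - (k:ℝ)*ε) := by
            rw [ENNReal.ofReal_sub _ (by positivity)]
      _ = ENNReal.ofReal ε := by ring_nf

lemma coordBracket (ν : Measure ℝ) [IsProbabilityMeasure ν] {ε : ℝ} (hε : 0 < ε) :
    ∃ 𝒮 : Finset (Set ℝ), (∀ S ∈ 𝒮, MeasurableSet S) ∧
      ∀ a b : ℝ, ∃ O ∈ 𝒮, ∃ I ∈ 𝒮, I ⊆ Set.Icc a b ∧ Set.Icc a b ⊆ O ∧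
        ν (O \ Set.Icc a b) ≤ ENNReal.ofReal (2*ε) ∧
        ν (Set.Icc a b \ I) ≤ ENNReal.ofReal (2*ε) := by
  classical
  by_cases hε1 : 1 ≤ ε
  · refine ⟨{∅, Set.univ}, ?_, ?_⟩
    · intro S hS
      simp only [Finset.mem_insert, Finset.mem_singleton] at hS
      rcases hS with h | h <;> subst h
      · exact MeasurableSet.empty
      · exact MeasurableSet.univ
    · intro a b
      refine ⟨Set.univ, by simp, ∅, by simp, Set.empty_subset _, Set.subset_univ _, ?_, ?_⟩
      · calc ν (Set.univ \ Set.Icc a b) ≤ 1 := prob_le_one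
          _ ≤ ENNReal.ofReal (2*ε) := ENNReal.one_le_ofReal.2 (by linarith)
      · calc ν (Set.Icc a b \ ∅) ≤ 1 := prob_le_one
          _ ≤ ENNReal.ofReal (2*ε) := ENNReal.one_le_ofReal.2 (by linarith)
  · push_neg at hε1
    obtain ⟨K, t, hK1, hmono, hg2, hg4, hg5⟩ := exists_grid ν hε hε1
    set T : Finset ℕ := Finset.Icc 1 K with hT
    set 𝒮₀ : Finset (Set ℝ) :=
      {∅, Set.univ} ∪ T.image (fun k => Set.Ici (t k)) ∪ T.image (fun k => Set.Iic (t k))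
        ∪ T.image (fun k => Set.Ioi (t k)) ∪ T.image (fun k => Set.Iio (t k)) with h𝒮₀
    have hmemIci : ∀ k, 1 ≤ k → k ≤ K → Set.Ici (t k) ∈ 𝒮₀ := by
      intro k h1 h2
      simp only [h𝒮₀, Finset.mem_union, Finset.mem_image]
      exact Or.inl (Or.inl (Or.inl (Or.inr ⟨k, by simp [hT, Finset.mem_Icc]; omega, rfl⟩)))
    have hmemIic : ∀ k, 1 ≤ k → k ≤ K → Set.Iic (t k) ∈ 𝒮₀ := by
      intro k h1 h2
      simp only [h𝒮₀, Finset.mem_union, Finset.mem_image]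
      exact Or.inl (Or.inl (Or.inr ⟨k, by simp [hT, Finset.mem_Icc]; omega, rfl⟩))
    have hmemIoi : ∀ k, 1 ≤ k → k ≤ K → Set.Ioi (t k) ∈ 𝒮₀ := by
      intro k h1 h2
      simp only [h𝒮₀, Finset.mem_union, Finset.mem_image]
      exact Or.inl (Or.inr ⟨k, by simp [hT, Finset.mem_Icc]; omega, rfl⟩)
    have hmemIio : ∀ k, 1 ≤ k → k ≤ K → Set.Iio (t k) ∈ 𝒮₀ := by
      intro k h1 h2
      simp only [h𝒮₀, Finset.mem_union, Finset.mem_image]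
      exact Or.inr ⟨k, by simp [hT, Finset.mem_Icc]; omega, rfl⟩
    have hmemE : (∅ : Set ℝ) ∈ 𝒮₀ := by simp [h𝒮₀]
    have hmemU : (Set.univ : Set ℝ) ∈ 𝒮₀ := by simp [h𝒮₀]
    have hmeas₀ : ∀ S ∈ 𝒮₀, MeasurableSet S := by
      intro S hS
      simp only [h𝒮₀, Finset.mem_union, Finset.mem_insert, Finset.mem_singleton,
        Finset.mem_image] at hS
      rcases hS with ((((h | h) | ⟨k, _, h⟩) | ⟨k, _, h⟩) | ⟨k, _, h⟩) | ⟨k, _, h⟩ <;> subst h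
      · exact MeasurableSet.empty
      · exact MeasurableSet.univ
      · exact measurableSet_Ici
      · exact measurableSet_Iic
      · exact measurableSet_Ioi
      · exact measurableSet_Iio
    have hIci : ∀ a : ℝ, ∃ O ∈ 𝒮₀, ∃ I ∈ 𝒮₀, I ⊆ Set.Ici a ∧ Set.Ici a ⊆ O ∧
        ν (O \ Set.Ici a) ≤ ENNReal.ofReal ε ∧ ν (Set.Ici a \ I) ≤ ENNReal.ofReal ε := by
      intro a
      by_cases hex : ∃ k, 1 ≤ k ∧ k ≤ K ∧ t k = a
      · obtain ⟨k, hk1, hkK, hka⟩ := hex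
        have hmem : Set.Ici a ∈ 𝒮₀ := hka ▸ hmemIci k hk1 hkK
        refine ⟨Set.Ici a, hmem, Set.Ici a, hmem, le_refl _, le_refl _, ?_, ?_⟩ <;>
          simp [Set.diff_self]
      · push_neg at hex
        by_cases ha1 : a < t 1
        · refine ⟨Set.univ, hmemU, Set.Ici (t 1), hmemIci 1 le_rfl hK1, ?_, Set.subset_univ _,
            ?_, ?_⟩
          · exact fun z hz => le_trans ha1.le hz
          · refine le_trans (measure_mono ?_) hg2
            intro z hz
            simp only [Set.mem_diff, Set.mem_Ici, not_le, Set.mem_univ, true_and] at hz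
            exact lt_trans hz ha1
          · refine le_trans (measure_mono ?_) hg2
            intro z hz
            simp only [Set.mem_diff, Set.mem_Ici, not_le, Set.mem_Iio] at hz ⊢
            exact hz.2
        · push_neg at ha1
          by_cases haK : t K < a
          · refine ⟨Set.Ioi (t K), hmemIoi K hK1 le_rfl, ∅, hmemE, Set.empty_subset _, ?_, ?_, ?_⟩
            · exact fun z hz => lt_of_lt_of_le haK hz
            · exact le_trans (measure_mono Set.diff_subset) hg4
            · refine le_trans (measure_mono ?_) hg4
              intro z hz
              simp only [Set.mem_diff, Set.mem_Ici] at hz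
              exact lt_of_lt_of_le haK hz.1
          · push_neg at haK
            have ha1' : t 1 < a := lt_of_le_of_ne ha1 (fun h => hex 1 le_rfl hK1 h)
            set Φ : Finset ℕ := T.filter (fun k => t k < a) with hΦ
            have hΦne : Φ.Nonempty := ⟨1, by
              simp only [hΦ, Finset.mem_filter, hT, Finset.mem_Icc]
              exact ⟨⟨le_rfl, hK1⟩, ha1'⟩⟩
            set k₀ : ℕ := Φ.max' hΦne with hk₀
            have hk₀mem : k₀ ∈ Φ := Φ.max'_mem hΦne
            simp only [hΦ, Finset.mem_filter, hT, Finset.mem_Icc] at hk₀mem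
            obtain ⟨⟨hk₀1, hk₀K⟩, hk₀lt⟩ := hk₀mem
            have hk₀K' : k₀ + 1 ≤ K := by
              rcases Nat.lt_or_ge k₀ K with h | h
              · omega
              · exfalso
                have heq : k₀ = K := le_antisymm hk₀K h
                rw [heq] at hk₀lt
                exact absurd hk₀lt (not_lt.2 haK)
            have hnext : a < t (k₀ + 1) := by
              have h1 : ¬ t (k₀+1) < a := by
                intro h
                have hm : k₀ + 1 ∈ Φ := by
                  simp only [hΦ, Finset.mem_filter, hT, Finset.mem_Icc]
                  exact ⟨⟨by omega, hk₀K'⟩, h⟩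
                have := Φ.le_max' _ hm
                omega
              push_neg at h1
              exact lt_of_le_of_ne h1 (fun h => hex (k₀+1) (by omega) hk₀K' h.symm)
            refine ⟨Set.Ioi (t k₀), hmemIoi k₀ hk₀1 hk₀K, Set.Ici (t (k₀+1)),
              hmemIci (k₀+1) (by omega) hk₀K', ?_, ?_, ?_, ?_⟩
            · exact fun z hz => le_trans hnext.le hz
            · exact fun z hz => lt_of_lt_of_le hk₀lt hz
            · refine le_trans (measure_mono ?_) (hg5 k₀ hk₀1 hk₀K')
              intro z hz
              simp only [Set.mem_diff, Set.mem_Ioi, Set.mem_Ici, not_le, Set.mem_Iio,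
                Set.mem_Iic] at hz ⊢
              exact ⟨lt_trans hz.2 hnext, hz.1⟩
            · refine le_trans (measure_mono ?_) (hg5 k₀ hk₀1 hk₀K')
              intro z hz
              simp only [Set.mem_diff, Set.mem_Ici, not_le, Set.mem_Iio, Set.mem_Iic] at hz ⊢
              exact ⟨hz.2, lt_of_lt_of_le hk₀lt hz.1⟩
    have hIic : ∀ b : ℝ, ∃ O ∈ 𝒮₀, ∃ I ∈ 𝒮₀, I ⊆ Set.Iic b ∧ Set.Iic b ⊆ O ∧
        ν (O \ Set.Iic b) ≤ ENNReal.ofReal ε ∧ ν (Set.Iic b \ I) ≤ ENNReal.ofReal ε := by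
      intro b
      by_cases hex : ∃ k, 1 ≤ k ∧ k ≤ K ∧ t k = b
      · obtain ⟨k, hk1, hkK, hkb⟩ := hex
        have hmem : Set.Iic b ∈ 𝒮₀ := hkb ▸ hmemIic k hk1 hkK
        refine ⟨Set.Iic b, hmem, Set.Iic b, hmem, le_refl _, le_refl _, ?_, ?_⟩ <;>
          simp [Set.diff_self]
      · push_neg at hex
        by_cases hb1 : b < t 1
        · refine ⟨Set.Iio (t 1), hmemIio 1 le_rfl hK1, ∅, hmemE, Set.empty_subset _, ?_, ?_, ?_⟩
          · exact fun z hz => lt_of_le_of_lt hz hb1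
          · exact le_trans (measure_mono Set.diff_subset) hg2
          · refine le_trans (measure_mono ?_) hg2
            intro z hz
            simp only [Set.mem_diff, Set.mem_Iic, Set.mem_Iio] at hz ⊢
            exact lt_of_le_of_lt hz.1 hb1
        · push_neg at hb1
          by_cases hbK : t K < b
          · refine ⟨Set.univ, hmemU, Set.Iic (t K), hmemIic K hK1 le_rfl, ?_, Set.subset_univ _,
              ?_, ?_⟩
            · exact fun z hz => le_trans hz hbK.le
            · refine le_trans (measure_mono ?_) hg4
              intro z hz
              simp only [Set.mem_diff, Set.mem_Iic, not_le, Set.mem_univ, true_and,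
                Set.mem_Ioi] at hz ⊢
              exact lt_trans hbK hz
            · refine le_trans (measure_mono ?_) hg4
              intro z hz
              simp only [Set.mem_diff, Set.mem_Iic, not_le, Set.mem_Ioi] at hz ⊢
              exact hz.2
          · push_neg at hbK
            have hb1' : t 1 < b := lt_of_le_of_ne hb1 (fun h => hex 1 le_rfl hK1 h)
            set Φ : Finset ℕ := T.filter (fun k => t k < b) with hΦ
            have hΦne : Φ.Nonempty := ⟨1, by
              simp only [hΦ, Finset.mem_filter, hT, Finset.mem_Icc]
              exact ⟨⟨le_rfl, hK1⟩, hb1'⟩⟩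
            set k₀ : ℕ := Φ.max' hΦne with hk₀
            have hk₀mem : k₀ ∈ Φ := Φ.max'_mem hΦne
            simp only [hΦ, Finset.mem_filter, hT, Finset.mem_Icc] at hk₀mem
            obtain ⟨⟨hk₀1, hk₀K⟩, hk₀lt⟩ := hk₀mem
            have hk₀K' : k₀ + 1 ≤ K := by
              rcases Nat.lt_or_ge k₀ K with h | h
              · omega
              · exfalso
                have heq : k₀ = K := le_antisymm hk₀K h
                rw [heq] at hk₀lt
                exact absurd hk₀lt (not_lt.2 hbK)
            have hnext : b < t (k₀ + 1) := by
              have h1 : ¬ t (k₀+1) < b := by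
                intro h
                have hm : k₀ + 1 ∈ Φ := by
                  simp only [hΦ, Finset.mem_filter, hT, Finset.mem_Icc]
                  exact ⟨⟨by omega, hk₀K'⟩, h⟩
                have := Φ.le_max' _ hm
                omega
              push_neg at h1
              exact lt_of_le_of_ne h1 (fun h => hex (k₀+1) (by omega) hk₀K' h.symm)
            refine ⟨Set.Iio (t (k₀+1)), hmemIio (k₀+1) (by omega) hk₀K', Set.Iic (t k₀),
              hmemIic k₀ hk₀1 hk₀K, ?_, ?_, ?_, ?_⟩
            · exact fun z hz => le_trans hz hk₀lt.le
            · exact fun z hz => lt_of_le_of_lt hz hnext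
            · refine le_trans (measure_mono ?_) (hg5 k₀ hk₀1 hk₀K')
              intro z hz
              simp only [Set.mem_diff, Set.mem_Iio, Set.mem_Iic, not_le] at hz ⊢
              exact ⟨hz.1, lt_trans hk₀lt hz.2⟩
            · refine le_trans (measure_mono ?_) (hg5 k₀ hk₀1 hk₀K')
              intro z hz
              simp only [Set.mem_diff, Set.mem_Iic, not_le, Set.mem_Iio] at hz ⊢
              exact ⟨lt_of_le_of_lt hz.1 hnext, hz.2⟩
    -- combine
    refine ⟨Finset.image₂ (· ∩ ·) 𝒮₀ 𝒮₀, ?_, ?_⟩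
    · intro S hS
      rw [Finset.mem_image₂] at hS
      obtain ⟨A, hA, B, hB, rfl⟩ := hS
      exact (hmeas₀ A hA).inter (hmeas₀ B hB)
    · intro a b
      obtain ⟨OL, hOL, IL, hIL, hILsub, hOLsub, hOLd, hILd⟩ := hIci a
      obtain ⟨OU, hOU, IU, hIU, hIUsub, hOUsub, hOUd, hIUd⟩ := hIic b
      refine ⟨OL ∩ OU, Finset.mem_image₂_of_mem hOL hOU, IL ∩ IU,
        Finset.mem_image₂_of_mem hIL hIU, ?_, ?_, ?_, ?_⟩
      · rw [← Set.Ici_inter_Iic]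
        exact Set.inter_subset_inter hILsub hIUsub
      · rw [← Set.Ici_inter_Iic]
        exact Set.inter_subset_inter hOLsub hOUsub
      · have hsub : (OL ∩ OU) \ Set.Icc a b ⊆ (OL \ Set.Ici a) ∪ (OU \ Set.Iic b) := by
          intro z hz
          simp only [Set.mem_diff, Set.mem_inter_iff, Set.mem_Icc, Set.mem_union, Set.mem_Ici,
            Set.mem_Iic, not_and_or] at hz ⊢
          rcases hz.2 with h | h
          · exact Or.inl ⟨hz.1.1, h⟩
          · exact Or.inr ⟨hz.1.2, h⟩
        calc ν ((OL ∩ OU) \ Set.Icc a b) ≤ ν ((OL \ Set.Ici a) ∪ (OU \ Set.Iic b)) :=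
              measure_mono hsub
        _ ≤ ν (OL \ Set.Ici a) + ν (OU \ Set.Iic b) := measure_union_le _ _
        _ ≤ ENNReal.ofReal ε + ENNReal.ofReal ε := add_le_add hOLd hOUd
        _ = ENNReal.ofReal (2*ε) := by rw [← ENNReal.ofReal_add hε.le hε.le]; ring_nf
      · have hsub : Set.Icc a b \ (IL ∩ IU) ⊆ (Set.Ici a \ IL) ∪ (Set.Iic b \ IU) := by
          intro z hz
          simp only [Set.mem_diff, Set.mem_inter_iff, Set.mem_Icc, Set.mem_union, Set.mem_Ici,
            Set.mem_Iic, not_and_or] at hz ⊢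
          rcases hz.2 with h | h
          · exact Or.inl ⟨hz.1.1, h⟩
          · exact Or.inr ⟨hz.1.2, h⟩
        calc ν (Set.Icc a b \ (IL ∩ IU)) ≤ ν ((Set.Ici a \ IL) ∪ (Set.Iic b \ IU)) :=
              measure_mono hsub
        _ ≤ ν (Set.Ici a \ IL) + ν (Set.Iic b \ IU) := measure_union_le _ _
        _ ≤ ENNReal.ofReal ε + ENNReal.ofReal ε := add_le_add hILd hIUd
        _ = ENNReal.ofReal (2*ε) := by rw [← ENNReal.ofReal_add hε.le hε.le]; ring_nf

noncomputable def emp {Ω : Type*} (X : ℕ → Ω → (Fin p → ℝ)) (n : ℕ) (ω : Ω)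
    (S : Set (Fin p → ℝ)) : ℝ :=
  (n : ℝ)⁻¹ * ∑ i ∈ Finset.range n, Set.indicator S (fun _ => (1 : ℝ)) (X i ω)

lemma emp_mono {Ω : Type*} (X : ℕ → Ω → (Fin p → ℝ)) (n : ℕ) (ω : Ω)
    {S T : Set (Fin p → ℝ)} (h : S ⊆ T) : emp X n ω S ≤ emp X n ω T := by
  apply mul_le_mul_of_nonneg_left _ (inv_nonneg.2 (Nat.cast_nonneg n))
  apply Finset.sum_le_sum
  intro i _
  exact Set.indicator_le_indicator_of_subset h (fun _ => zero_le_one) _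

lemma slln_indicator {Ω : Type*} [MeasurableSpace Ω] (ℙ : Measure Ω)
    [IsProbabilityMeasure ℙ] (μ : Measure (Fin p → ℝ)) [IsProbabilityMeasure μ]
    (X : ℕ → Ω → (Fin p → ℝ))
    (hmeas : ∀ i, Measurable (X i))
    (hindep : ProbabilityTheory.iIndepFun X ℙ)
    (hident : ∀ i, Measure.map (X i) ℙ = μ)
    {S : Set (Fin p → ℝ)} (hS : MeasurableSet S) :
    ∀ᵐ ω ∂ℙ, Tendsto (fun n => emp X n ω S) atTop (𝓝 (μ S).toReal) := by
  set g : (Fin p → ℝ) → ℝ := Set.indicator S (fun _ => (1:ℝ)) with hg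
  have hgmeas : Measurable g := Measurable.indicator measurable_const hS
  set Y : ℕ → Ω → ℝ := fun i ω => g (X i ω) with hY
  have hYmeas : ∀ i, Measurable (Y i) := fun i => hgmeas.comp (hmeas i)
  have hint : Integrable (Y 0) ℙ := by
    refine (integrable_const (1:ℝ)).mono' (hYmeas 0).aestronglyMeasurable ?_
    filter_upwards with ω
    simp only [hY, Real.norm_eq_abs]
    rw [abs_le]
    constructor
    · by_cases h : X 0 ω ∈ S <;> simp [hg, Set.indicator_apply, h]
    · by_cases h : X 0 ω ∈ S <;> simp [hg, Set.indicator_apply, h]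
  have hpind : Pairwise (Function.onFun (ProbabilityTheory.IndepFun · · ℙ) Y) := by
    intro i j hij
    exact (hindep.indepFun hij).comp hgmeas hgmeas
  have hpid : ∀ i, ProbabilityTheory.IdentDistrib (Y i) (Y 0) ℙ ℙ := by
    intro i
    refine ⟨(hYmeas i).aemeasurable, (hYmeas 0).aemeasurable, ?_⟩
    have h1 : Measure.map (Y i) ℙ = Measure.map g (Measure.map (X i) ℙ) :=
      (Measure.map_map hgmeas (hmeas i)).symm
    have h2 : Measure.map (Y 0) ℙ = Measure.map g (Measure.map (X 0) ℙ) :=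
      (Measure.map_map hgmeas (hmeas 0)).symm
    rw [h1, h2, hident i, hident 0]
  have hE : (∫ ω, Y 0 ω ∂ℙ) = (μ S).toReal := by
    have h1 : (∫ ω, Y 0 ω ∂ℙ) = ∫ z, g z ∂(Measure.map (X 0) ℙ) :=
      (integral_map (hmeas 0).aemeasurable hgmeas.aestronglyMeasurable).symm
    rw [h1, hident 0, hg, integral_indicator_const _ hS]
    simp [measureReal_def]
  have h := ProbabilityTheory.strong_law_ae Y hint hpind hpid
  rw [hE] at h
  filter_upwards [h] with ω hω
  have : (fun n : ℕ => emp X n ω S) = fun n : ℕ => (n:ℝ)⁻¹ • ∑ i ∈ Finset.range n, Y i ω := by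
    funext n
    simp [emp, smul_eq_mul, hY, hg]
  rw [this]
  exact hω

lemma meas_toReal_le_add {α : Type*} [MeasurableSpace α] {μ : Measure α} [IsProbabilityMeasure μ]
    {A B : Set α} {r : ℝ} (h : μ A ≤ μ B + ENNReal.ofReal r) (hr : 0 ≤ r) :
    (μ A).toReal ≤ (μ B).toReal + r := by
  have hfin : μ B + ENNReal.ofReal r ≠ ⊤ :=
    ENNReal.add_ne_top.2 ⟨measure_ne_top μ B, ENNReal.ofReal_ne_top⟩
  calc (μ A).toReal ≤ (μ B + ENNReal.ofReal r).toReal := ENNReal.toReal_mono hfin h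
  _ = (μ B).toReal + r := by
      rw [ENNReal.toReal_add (measure_ne_top μ B) ENNReal.ofReal_ne_top,
        ENNReal.toReal_ofReal hr]

lemma boxEst (μ : Measure (Fin p → ℝ)) [IsProbabilityMeasure μ] {εk : ℝ} (hεk : 0 < εk)
    (𝒮 : Fin p → Finset (Set ℝ))
    (hmeasS : ∀ j, ∀ S ∈ 𝒮 j, MeasurableSet S)
    (a b : Fin p → ℝ)
    (hbr : ∀ j, ∃ O ∈ 𝒮 j, ∃ I ∈ 𝒮 j, I ⊆ Set.Icc (a j) (b j) ∧ Set.Icc (a j) (b j) ⊆ O ∧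
      (μ.map (fun z => z j)) (O \ Set.Icc (a j) (b j)) ≤ ENNReal.ofReal (2*εk) ∧
      (μ.map (fun z => z j)) (Set.Icc (a j) (b j) \ I) ≤ ENNReal.ofReal (2*εk))
    (E : Set (Fin p → ℝ) → ℝ)
    (hEmono : ∀ S T : Set (Fin p → ℝ), S ⊆ T → E S ≤ E T)
    (hEconv : ∀ f ∈ Fintype.piFinset 𝒮,
      |E (Set.univ.pi f) - (μ (Set.univ.pi f)).toReal| < εk) :
    |E (Set.univ.pi (fun j => Set.Icc (a j) (b j))) -
      (μ (Set.univ.pi (fun j => Set.Icc (a j) (b j)))).toReal| ≤ (2*(p:ℝ)+1)*εk := by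
  classical
  choose O hOmem I hImem hIsub hOsub hOd hId using hbr
  set B : Set (Fin p → ℝ) := Set.univ.pi (fun j => Set.Icc (a j) (b j)) with hB
  have hOpi : B ⊆ Set.univ.pi O := by
    intro z hz j hj
    exact hOsub j (hz j hj)
  have hIpi : Set.univ.pi I ⊆ B := by
    intro z hz j hj
    exact hIsub j (hz j hj)
  -- measure difference bounds
  have hdiffO : μ (Set.univ.pi O \ B) ≤ ENNReal.ofReal ((p:ℝ) * (2*εk)) := by
    have hsub : Set.univ.pi O \ B ⊆
        ⋃ j, (fun z : Fin p → ℝ => z j) ⁻¹' (O j \ Set.Icc (a j) (b j)) := by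
      intro z hz
      obtain ⟨hz1, hz2⟩ := hz
      rw [hB] at hz2
      simp only [Set.mem_univ_pi, not_forall] at hz2
      obtain ⟨j, hj⟩ := hz2
      exact Set.mem_iUnion.2 ⟨j, hz1 j (Set.mem_univ j), hj⟩
    calc μ (Set.univ.pi O \ B) ≤ μ (⋃ j, (fun z : Fin p → ℝ => z j) ⁻¹' (O j \ Set.Icc (a j) (b j))) :=
          measure_mono hsub
    _ ≤ ∑ j : Fin p, μ ((fun z : Fin p → ℝ => z j) ⁻¹' (O j \ Set.Icc (a j) (b j))) :=
          measure_iUnion_fintype_le _ _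
    _ ≤ ∑ j : Fin p, ENNReal.ofReal (2*εk) := by
          apply Finset.sum_le_sum
          intro j _
          rw [← Measure.map_apply (measurable_pi_apply j)
            ((hmeasS j _ (hOmem j)).diff measurableSet_Icc)]
          exact hOd j
    _ = ENNReal.ofReal ((p:ℝ) * (2*εk)) := by
          rw [Finset.sum_const, Finset.card_univ, Fintype.card_fin, nsmul_eq_mul,
            ← ENNReal.ofReal_natCast p, ← ENNReal.ofReal_mul (Nat.cast_nonneg p)]
  have hdiffI : μ (B \ Set.univ.pi I) ≤ ENNReal.ofReal ((p:ℝ) * (2*εk)) := by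
    have hsub : B \ Set.univ.pi I ⊆
        ⋃ j, (fun z : Fin p → ℝ => z j) ⁻¹' (Set.Icc (a j) (b j) \ I j) := by
      intro z hz
      obtain ⟨hz1, hz2⟩ := hz
      simp only [Set.mem_univ_pi, not_forall] at hz2
      rw [hB] at hz1
      obtain ⟨j, hj⟩ := hz2
      exact Set.mem_iUnion.2 ⟨j, hz1 j (Set.mem_univ j), hj⟩
    calc μ (B \ Set.univ.pi I) ≤ μ (⋃ j, (fun z : Fin p → ℝ => z j) ⁻¹' (Set.Icc (a j) (b j) \ I j)) :=
          measure_mono hsub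
    _ ≤ ∑ j : Fin p, μ ((fun z : Fin p → ℝ => z j) ⁻¹' (Set.Icc (a j) (b j) \ I j)) :=
          measure_iUnion_fintype_le _ _
    _ ≤ ∑ j : Fin p, ENNReal.ofReal (2*εk) := by
          apply Finset.sum_le_sum
          intro j _
          rw [← Measure.map_apply (measurable_pi_apply j)
            (measurableSet_Icc.diff (hmeasS j _ (hImem j)))]
          exact hId j
    _ = ENNReal.ofReal ((p:ℝ) * (2*εk)) := by
          rw [Finset.sum_const, Finset.card_univ, Fintype.card_fin, nsmul_eq_mul,
            ← ENNReal.ofReal_natCast p, ← ENNReal.ofReal_mul (Nat.cast_nonneg p)]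
  have hr : (0:ℝ) ≤ (p:ℝ) * (2*εk) := by positivity
  have hO1 : (μ (Set.univ.pi O)).toReal ≤ (μ B).toReal + (p:ℝ) * (2*εk) := by
    apply meas_toReal_le_add _ hr
    calc μ (Set.univ.pi O) ≤ μ (B ∪ (Set.univ.pi O \ B)) :=
          measure_mono (fun z hz => by
            by_cases h : z ∈ B
            · exact Or.inl h
            · exact Or.inr ⟨hz, h⟩)
    _ ≤ μ B + μ (Set.univ.pi O \ B) := measure_union_le _ _
    _ ≤ μ B + ENNReal.ofReal ((p:ℝ) * (2*εk)) := add_le_add le_rfl hdiffO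
  have hI1 : (μ B).toReal ≤ (μ (Set.univ.pi I)).toReal + (p:ℝ) * (2*εk) := by
    apply meas_toReal_le_add _ hr
    calc μ B ≤ μ (Set.univ.pi I ∪ (B \ Set.univ.pi I)) :=
          measure_mono (fun z hz => by
            by_cases h : z ∈ Set.univ.pi I
            · exact Or.inl h
            · exact Or.inr ⟨hz, h⟩)
    _ ≤ μ (Set.univ.pi I) + μ (B \ Set.univ.pi I) := measure_union_le _ _
    _ ≤ μ (Set.univ.pi I) + ENNReal.ofReal ((p:ℝ) * (2*εk)) := add_le_add le_rfl hdiffI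
  have hOconv := hEconv O (Fintype.mem_piFinset.2 hOmem)
  have hIconv := hEconv I (Fintype.mem_piFinset.2 hImem)
  rw [abs_lt] at hOconv hIconv
  have hEO : E B ≤ E (Set.univ.pi O) := hEmono _ _ hOpi
  have hEI : E (Set.univ.pi I) ≤ E B := hEmono _ _ hIpi
  rw [abs_le]
  constructor
  · nlinarith [hOconv.1, hOconv.2, hIconv.1, hIconv.2]
  · nlinarith [hOconv.1, hOconv.2, hIconv.1, hIconv.2]

end AuxiliaryGC

/-- Uniform strong consistency of the empirical local half-region depth. -/
theorem ldHRemp_uniform_consistent {Ω : Type*} [MeasurableSpace Ω] (ℙ : Measure Ω)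
    [IsProbabilityMeasure ℙ] (μ : Measure (Fin p → ℝ)) [IsProbabilityMeasure μ]
    (X : ℕ → Ω → (Fin p → ℝ))
    (hmeas : ∀ i, Measurable (X i))
    (hindep : ProbabilityTheory.iIndepFun X ℙ)
    (hident : ∀ i, Measure.map (X i) ℙ = μ)
    (τ : Fin p → ℝ) (hτ : ∀ j, 0 ≤ τ j) :
    ∀ᵐ ω ∂ℙ, Tendsto
      (fun n => ⨆ x : Fin p → ℝ, |ldHRemp X n ω x τ - ldHRreal μ x τ|)
      atTop (𝓝 0) := by
  classical
  -- marginal measures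
  set ν : Fin p → Measure ℝ := fun j => μ.map (fun z => z j) with hν
  have hνprob : ∀ j, IsProbabilityMeasure (ν j) := fun j =>
    Measure.isProbabilityMeasure_map (measurable_pi_apply j).aemeasurable
  -- per-scale coordinate families
  have hcb : ∀ (k : ℕ) (j : Fin p),
      ∃ 𝒮 : Finset (Set ℝ), (∀ S ∈ 𝒮, MeasurableSet S) ∧
        ∀ a b : ℝ, ∃ O ∈ 𝒮, ∃ I ∈ 𝒮, I ⊆ Set.Icc a b ∧ Set.Icc a b ⊆ O ∧
          (ν j) (O \ Set.Icc a b) ≤ ENNReal.ofReal (2*(1/((k:ℝ)+1))) ∧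
          (ν j) (Set.Icc a b \ I) ≤ ENNReal.ofReal (2*(1/((k:ℝ)+1))) := by
    intro k j
    haveI := hνprob j
    exact coordBracket (ν j) (by positivity)
  choose 𝒮 h𝒮meas h𝒮br using hcb
  -- almost sure event
  have hae : ∀ᵐ ω ∂ℙ, ∀ k : ℕ, ∀ f ∈ Fintype.piFinset (𝒮 k),
      Tendsto (fun n => emp X n ω (Set.univ.pi f)) atTop (𝓝 (μ (Set.univ.pi f)).toReal) := by
    rw [ae_all_iff]
    intro k
    simp only [← Finset.mem_coe]
    rw [ae_ball_iff (Finset.countable_toSet _)]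
    intro f hf
    rw [Finset.mem_coe] at hf
    apply slln_indicator ℙ μ X hmeas hindep hident
    exact MeasurableSet.univ_pi (fun j => h𝒮meas k j _ (Fintype.mem_piFinset.1 hf j))
  filter_upwards [hae] with ω hω
  rw [NormedAddCommGroup.tendsto_nhds_zero]
  intro ε hε
  -- pick the scale
  obtain ⟨k, hk⟩ : ∃ k : ℕ, (2*(p:ℝ)+1) * (1/((k:ℝ)+1)) < ε := by
    obtain ⟨k, hk⟩ := exists_nat_gt ((2*(p:ℝ)+1)/ε)
    refine ⟨k, ?_⟩
    rw [mul_one_div, div_lt_iff₀ (by positivity)]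
    rw [div_lt_iff₀ hε] at hk
    nlinarith [hε, Nat.cast_nonneg (α := ℝ) k]
  set εk : ℝ := 1/((k:ℝ)+1) with hεk
  have hεkpos : 0 < εk := by positivity
  have hev : ∀ᶠ n in atTop, ∀ f ∈ Fintype.piFinset (𝒮 k),
      |emp X n ω (Set.univ.pi f) - (μ (Set.univ.pi f)).toReal| < εk := by
    rw [eventually_all_finset]
    intro f hf
    have h1 := hω k f hf
    have h2 := h1 (Metric.ball_mem_nhds _ hεkpos)
    filter_upwards [h2] with n hn
    simpa [Real.dist_eq] using hn
  filter_upwards [hev] with n hn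
  have hperx : ∀ x : Fin p → ℝ,
      |ldHRemp X n ω x τ - ldHRreal μ x τ| ≤ (2*(p:ℝ)+1)*εk := by
    intro x
    -- rewrite the two boxes as pi-boxes
    have hlow : lowerBox x τ = Set.univ.pi (fun j => Set.Icc (x j - τ j) (x j)) := by
      ext z
      simp only [lowerBox, Set.mem_setOf_eq, Set.mem_univ_pi, Set.mem_Icc]
    have hup : upperBox x τ = Set.univ.pi (fun j => Set.Icc (x j) (x j + τ j)) := by
      ext z
      simp only [upperBox, Set.mem_setOf_eq, Set.mem_univ_pi, Set.mem_Icc]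
    have hEL := boxEst μ hεkpos (𝒮 k) (h𝒮meas k) (fun j => x j - τ j) (fun j => x j)
      (fun j => h𝒮br k j (x j - τ j) (x j)) (emp X n ω) (fun S T h => emp_mono X n ω h) hn
    have hEU := boxEst μ hεkpos (𝒮 k) (h𝒮meas k) (fun j => x j) (fun j => x j + τ j)
      (fun j => h𝒮br k j (x j) (x j + τ j)) (emp X n ω) (fun S T h => emp_mono X n ω h) hn
    have hmin : ldHRemp X n ω x τ = min (emp X n ω (lowerBox x τ)) (emp X n ω (upperBox x τ)) :=
      rfl
    have hminr : ldHRreal μ x τ = min (μ (lowerBox x τ)).toReal (μ (upperBox x τ)).toReal := rfl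
    rw [hmin, hminr]
    refine le_trans (abs_min_sub_min_le_max _ _ _ _) (max_le ?_ ?_)
    · rw [hlow]
      exact hEL
    · rw [hup]
      exact hEU
  rw [Real.norm_eq_abs, abs_of_nonneg (Real.iSup_nonneg (fun x => abs_nonneg _))]
  exact lt_of_le_of_lt (ciSup_le hperx) hk
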